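/- Let a, b ∈ ℝ and x_o, y_o ∈ ℝ (a stationary obstacle point). Let x, y, θ, v, ω, u_v : ℝ → ℝ satisfy, on an open interval I, x' = v cos θ, y' = v sin θ, θ' = ω, v' = −a v + b u_v, with d_o(t) := √((x(t)−x_o)² + (y(t)−y_o)²) > 0 on I. Let β_o : I → ℝ be differentiable with cos β_o = (x−x_o)/d_o and sin β_o = (y−y_o)/d_o on I, and set δ = θ − β_o. Then d_o is twice differentiable on I with d_o''(t) = (−a v + b u_v)·cos δ − vω·sin δ + (v²/d_o)·sin² δ, all evaluated at t. -/

import Mathlib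

open Real

/-- Second derivative of the distance to a stationary obstacle point under the
nominal unicycle dynamics:
`d̈_o = (−a v + b u_v) cos δ − v ω sin δ + (v²/d_o) sin² δ` with `δ = θ − β_o`. -/
theorem stmt16 (a b x_o y_o : ℝ) (x y θ v ω u_v : ℝ → ℝ)
    (I : Set ℝ) (hI : IsOpen I)
    (hx : ∀ t ∈ I, HasDerivAt x (v t * cos (θ t)) t)
    (hy : ∀ t ∈ I, HasDerivAt y (v t * sin (θ t)) t)
    (hθ : ∀ t ∈ I, HasDerivAt θ (ω t) t)
    (hv : ∀ t ∈ I, HasDerivAt v (-a * v t + b * u_v t) t)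
    (d_o : ℝ → ℝ)
    (hdo : d_o = fun s => Real.sqrt ((x s - x_o) ^ 2 + (y s - y_o) ^ 2))
    (hpos : ∀ t ∈ I, 0 < d_o t)
    (β_o : ℝ → ℝ)
    (hβdiff : ∀ t ∈ I, DifferentiableAt ℝ β_o t)
    (hβcos : ∀ t ∈ I, cos (β_o t) = (x t - x_o) / d_o t)
    (hβsin : ∀ t ∈ I, sin (β_o t) = (y t - y_o) / d_o t) :
    ∀ t ∈ I, DifferentiableAt ℝ d_o t ∧
      HasDerivAt (deriv d_o)
        ((-a * v t + b * u_v t) * cos (θ t - β_o t)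
          - v t * ω t * sin (θ t - β_o t)
          + v t ^ 2 / d_o t * sin (θ t - β_o t) ^ 2) t := by
  have hfpos : ∀ s ∈ I, 0 < (x s - x_o) ^ 2 + (y s - y_o) ^ 2 := by
    intro s hs
    have h := hpos s hs
    rw [hdo] at h
    exact Real.sqrt_pos.mp h
  have hdne : ∀ s ∈ I, d_o s ≠ 0 := fun s hs => (hpos s hs).ne'
  have hdeq : ∀ s, d_o s = Real.sqrt ((x s - x_o) ^ 2 + (y s - y_o) ^ 2) := by
    intro s; rw [hdo]
  -- first derivative of d_o
  have hd : ∀ s ∈ I, HasDerivAt d_o (v s * cos (θ s - β_o s)) s := by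
    intro s hs
    have hf : HasDerivAt (fun u => (x u - x_o) ^ 2 + (y u - y_o) ^ 2)
        (2 * (x s - x_o) * (v s * cos (θ s)) + 2 * (y s - y_o) * (v s * sin (θ s))) s := by
      have h1 := (((hx s hs).sub_const x_o).pow 2).add (((hy s hs).sub_const y_o).pow 2)
      exact h1.congr_deriv (by push_cast; ring)
    have hsq := hf.sqrt (hfpos s hs).ne'
    rw [hdo]
    convert hsq using 1
    rw [← hdeq s, Real.cos_sub, hβcos s hs, hβsin s hs]
    field_simp
  -- derivative of β_o
  have hβ' : ∀ s ∈ I, HasDerivAt β_o (v s * sin (θ s - β_o s) / d_o s) s := by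
    intro s hs
    have hB : HasDerivAt β_o (deriv β_o s) s := (hβdiff s hs).hasDerivAt
    have hmem := hI.mem_nhds hs
    -- derivative of (x - x_o)/d_o
    have hq1 : HasDerivAt (fun u => (x u - x_o) / d_o u)
        ((v s * cos (θ s) * d_o s - (x s - x_o) * (v s * cos (θ s - β_o s))) / d_o s ^ 2) s :=
      ((hx s hs).sub_const x_o).div (hd s hs) (hdne s hs)
    have hq2 : HasDerivAt (fun u => (y u - y_o) / d_o u)
        ((v s * sin (θ s) * d_o s - (y s - y_o) * (v s * cos (θ s - β_o s))) / d_o s ^ 2) s :=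
      ((hy s hs).sub_const y_o).div (hd s hs) (hdne s hs)
    have e1 : (fun u => cos (β_o u)) =ᶠ[nhds s] fun u => (x u - x_o) / d_o u :=
      Filter.eventually_of_mem hmem fun u hu => hβcos u hu
    have e2 : (fun u => sin (β_o u)) =ᶠ[nhds s] fun u => (y u - y_o) / d_o u :=
      Filter.eventually_of_mem hmem fun u hu => hβsin u hu
    have hc1 : HasDerivAt (fun u => cos (β_o u))
        ((v s * cos (θ s) * d_o s - (x s - x_o) * (v s * cos (θ s - β_o s))) / d_o s ^ 2) s :=
      hq1.congr_of_eventuallyEq e1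
    have hc2 : HasDerivAt (fun u => sin (β_o u))
        ((v s * sin (θ s) * d_o s - (y s - y_o) * (v s * cos (θ s - β_o s))) / d_o s ^ 2) s :=
      hq2.congr_of_eventuallyEq e2
    have hc1' : HasDerivAt (fun u => cos (β_o u)) (-sin (β_o s) * deriv β_o s) s := hB.cos
    have hc2' : HasDerivAt (fun u => sin (β_o u)) (cos (β_o s) * deriv β_o s) s := hB.sin
    have u1 := hc1'.unique hc1
    have u2 := hc2'.unique hc2
    have hBval : deriv β_o s = v s * sin (θ s - β_o s) / d_o s := by
      have hpy : sin (β_o s) ^ 2 + cos (β_o s) ^ 2 = 1 := sin_sq_add_cos_sq (β_o s)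
      have hne := hdne s hs
      have hxv : x s - x_o = d_o s * cos (β_o s) := by
        rw [hβcos s hs]; field_simp
      have hyv : y s - y_o = d_o s * sin (β_o s) := by
        rw [hβsin s hs]; field_simp
      have key : deriv β_o s = -sin (β_o s) * (-sin (β_o s) * deriv β_o s)
          + cos (β_o s) * (cos (β_o s) * deriv β_o s) := by linear_combination (-deriv β_o s) * hpy
      rw [key, u1, u2, Real.sin_sub, Real.cos_sub, hxv, hyv]
      field_simp
      ring
    rw [← hBval]; exact hB
  intro t ht
  refine ⟨(hd t ht).differentiableAt, ?_⟩
  have hmem := hI.mem_nhds ht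
  have e3 : (fun s => v s * cos (θ s - β_o s)) =ᶠ[nhds t] deriv d_o :=
    Filter.eventually_of_mem hmem fun s hs => ((hd s hs).deriv).symm
  have hg : HasDerivAt (fun s => v s * cos (θ s - β_o s))
      ((-a * v t + b * u_v t) * cos (θ t - β_o t)
        - v t * ω t * sin (θ t - β_o t)
        + v t ^ 2 / d_o t * sin (θ t - β_o t) ^ 2) t := by
    have hδ : HasDerivAt (fun s => cos (θ s - β_o s))
        (-sin (θ t - β_o t) * (ω t - v t * sin (θ t - β_o t) / d_o t)) t :=
      ((hθ t ht).sub (hβ' t ht)).cos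
    have := (hv t ht).mul hδ
    have hne := hdne t ht
    exact this.congr_deriv (by field_simp; ring)
  exact hg.congr_of_eventuallyEq e3.symm
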